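/- arXiv:1208.1537 — 2 statements merged into one kernel-verified Lean document; each statement's English description precedes it below -/
import Mathlib

section
/- With f_{s,k,i} and α_{s,k,i} as defined, for all positive integers u and 1 ≤ i ≤ k-2: f_{s,k,i}(u)/f_{s,k,i+1}(u) = ∑_{d|u} μ(d) C(s,i)^{ω(d)} / α_{s,k,i}(d), where μ is the Möbius function and ω(d) the number of distinct prime factors of d. -/
/-- `f_{s,k,i}(u)`. -/
noncomputable def f (s k i u : ℕ) : ℝ :=
  ∏ p ∈ u.primeFactors,
    (1 - (∑ m ∈ Finset.Icc i (k-1), (s.choose m : ℝ) * ((p:ℝ) - 1)^(k-1-m)) /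
         (∑ m ∈ Finset.range k, (s.choose m : ℝ) * ((p:ℝ) - 1)^(k-1-m)))

/-- `α_{s,k,i}(d)`. -/
noncomputable def alpha (s i d : ℕ) : ℝ :=
  (d:ℝ)^i * ∏ p ∈ d.primeFactors,
    ∑ m ∈ Finset.range (i+1), (s.choose m : ℝ) * (1 - 1/(p:ℝ))^(i-m) * (1/(p:ℝ))^m

private lemma alpha_one (s i : ℕ) : alpha s i 1 = 1 := by simp [alpha]

private lemma alpha_mul (s i : ℕ) {m n : ℕ} (hm : m ≠ 0) (hn : n ≠ 0)
    (hmn : m.Coprime n) : alpha s i (m * n) = alpha s i m * alpha s i n := by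
  unfold alpha
  rw [Nat.cast_mul, mul_pow, Nat.primeFactors_mul hm hn,
    Finset.prod_union hmn.disjoint_primeFactors]
  ring

/-- The multiplicative function `d ↦ C(s,i)^{ω(d)} / α_{s,i}(d)`. -/
noncomputable def g (s i : ℕ) : ArithmeticFunction ℝ :=
  ⟨fun d => if d = 0 then 0 else (s.choose i : ℝ)^(d.primeFactors.card) / alpha s i d,
    by simp⟩

private lemma g_apply (s i : ℕ) {d : ℕ} (hd : d ≠ 0) :
    g s i d = (s.choose i : ℝ)^(d.primeFactors.card) / alpha s i d := by
  simp [g, hd]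

private lemma g_mult (s i : ℕ) : (g s i).IsMultiplicative := by
  constructor
  · rw [g_apply s i one_ne_zero, alpha_one]; simp
  · intro m n hmn
    rcases eq_or_ne m 0 with rfl | hm
    · rw [Nat.coprime_zero_left] at hmn
      subst hmn
      simp [g]
    rcases eq_or_ne n 0 with rfl | hn
    · rw [Nat.coprime_zero_right] at hmn
      subst hmn
      simp [g]
    rw [g_apply s i (mul_ne_zero hm hn), g_apply s i hm, g_apply s i hn,
      alpha_mul s i hm hn hmn, Nat.primeFactors_mul hm hn,
      Finset.card_union_of_disjoint hmn.disjoint_primeFactors, pow_add,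
      mul_div_mul_comm]

private lemma squarefree_prod_primes {t : Finset ℕ} (ht : ∀ p ∈ t, p.Prime) :
    Squarefree (∏ p ∈ t, p) := by
  classical
  induction t using Finset.induction with
  | empty => simp
  | @insert a u ha ih =>
    rw [Finset.prod_insert ha]
    have hap : a.Prime := ht a (Finset.mem_insert_self a u)
    have hcop : a.Coprime (∏ p ∈ u, p) := by
      rw [hap.coprime_iff_not_dvd]
      intro hdvd
      obtain ⟨q, hq, hq'⟩ := (Nat.Prime.prime hap).exists_mem_finset_dvd hdvd
      have : a = q := ((ht q (Finset.mem_insert_of_mem hq)).dvd_iff_eq hap.ne_one).mp hq' |>.symm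
      exact ha (this ▸ hq)
    exact (Nat.squarefree_mul hcop).mpr
      ⟨hap.squarefree, ih fun p hp => ht p (Finset.mem_insert_of_mem hp)⟩

/-- The per-prime identity. -/
private lemma prime_term (s k i p : ℕ) (hk : 3 ≤ k) (hi1 : 1 ≤ i) (hik : i ≤ k - 2)
    (hp : p.Prime) :
    (1 - (∑ m ∈ Finset.Icc i (k-1), (s.choose m : ℝ) * ((p:ℝ) - 1)^(k-1-m)) /
         (∑ m ∈ Finset.range k, (s.choose m : ℝ) * ((p:ℝ) - 1)^(k-1-m))) /
    (1 - (∑ m ∈ Finset.Icc (i+1) (k-1), (s.choose m : ℝ) * ((p:ℝ) - 1)^(k-1-m)) /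
         (∑ m ∈ Finset.range k, (s.choose m : ℝ) * ((p:ℝ) - 1)^(k-1-m)))
    = 1 - (s.choose i : ℝ) / alpha s i p := by
  have hp2 : 2 ≤ p := hp.two_le
  set x : ℝ := (p:ℝ) - 1 with hxdef
  have hx : 1 ≤ x := by
    have : (2:ℝ) ≤ (p:ℝ) := by exact_mod_cast hp2
    simp only [hxdef]; linarith
  have hx0 : 0 < x := lt_of_lt_of_le one_pos hx
  -- sums
  set S : ℕ → ℝ := fun j => ∑ m ∈ Finset.range j, (s.choose m : ℝ) * x^(k-1-m) with hS
  set T : ℕ → ℝ := fun j => ∑ m ∈ Finset.range j, (s.choose m : ℝ) * x^(i-m) with hT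
  have hpos : ∀ (e : ℕ → ℕ) (j : ℕ), 1 ≤ j →
      0 < ∑ m ∈ Finset.range j, (s.choose m : ℝ) * x^(e m) := by
    intro e j hj
    apply Finset.sum_pos'
    · intro m _
      positivity
    · exact ⟨0, Finset.mem_range.mpr (by omega), by simp [pow_pos hx0]⟩
  have hD : 0 < S k := hpos _ k (by omega)
  have hsplit : ∀ j, j ≤ k →
      S j + ∑ m ∈ Finset.Icc j (k-1), (s.choose m : ℝ) * x^(k-1-m) = S k := by
    intro j hj
    have h1 : Finset.Icc j (k-1) = Finset.Ico j k := by
      rw [← Finset.Ico_add_one_right_eq_Icc]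
      congr 1
      omega
    rw [h1, hS]
    simp only [Finset.range_eq_Ico]
    exact Finset.sum_Ico_consecutive _ (Nat.zero_le j) hj
  have hfrac : ∀ j, j ≤ k →
      1 - (∑ m ∈ Finset.Icc j (k-1), (s.choose m : ℝ) * x^(k-1-m)) / S k = S j / S k := by
    intro j hj
    rw [eq_div_iff hD.ne', sub_mul, one_mul, div_mul_cancel₀ _ hD.ne']
    have := hsplit j hj
    linarith
  rw [hfrac i (by omega), hfrac (i+1) (by omega), div_div_div_comm, div_self hD.ne', div_one]
  -- alpha at a prime equals T (i+1)
  have hpne : (p:ℝ) ≠ 0 := by positivity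
  have halpha : alpha s i p = T (i+1) := by
    rw [alpha, hp.primeFactors, Finset.prod_singleton, Finset.mul_sum, hT]
    refine Finset.sum_congr rfl fun m hm => ?_
    have hm' : m ≤ i := by
      have := Finset.mem_range.mp hm; omega
    have hsplitp : (p:ℝ)^i = (p:ℝ)^(i-m) * (p:ℝ)^m := by
      rw [← pow_add]; congr 1; omega
    have h1 : (1 - 1/(p:ℝ)) = x / p := by
      field_simp
      exact hxdef.symm
    rw [hsplitp, h1, div_pow, one_div, inv_pow]
    field_simp
  -- S j = x^(k-1-i) * T j for j ≤ i+1
  have hST : ∀ j, j ≤ i + 1 → S j = x^(k-1-i) * T j := by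
    intro j hj
    rw [hS, hT, Finset.mul_sum]
    refine Finset.sum_congr rfl fun m hm => ?_
    have hm' : m < j := Finset.mem_range.mp hm
    rw [← mul_assoc, mul_comm (x ^ (k - 1 - i)) _, mul_assoc, ← pow_add]
    congr 2
    omega
  have hT1 : 0 < T (i+1) := hpos _ (i+1) (by omega)
  have hTs : T (i+1) = T i + (s.choose i : ℝ) := by
    simp only [hT, Finset.sum_range_succ, Nat.sub_self, pow_zero, mul_one]
  have hT1' : T i + (s.choose i : ℝ) ≠ 0 := by rw [← hTs]; exact hT1.ne'
  rw [halpha, hST i (by omega), hST (i+1) (by omega),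
    mul_div_mul_left _ _ (pow_ne_zero _ hx0.ne'), hTs]
  field_simp
  ring

open ArithmeticFunction in
theorem f_ratio_eq_divisor_sum (s k i u : ℕ) (hs : 1 ≤ s) (hk : 3 ≤ k)
    (hu : 0 < u) (hi1 : 1 ≤ i) (hik : i ≤ k - 2) :
    f s k i u / f s k (i+1) u
      = ∑ d ∈ u.divisors,
          (moebius d : ℝ) * (s.choose i : ℝ)^(d.primeFactors.card) / alpha s i d := by
  classical
  have hprimes : ∀ p ∈ u.primeFactors, p.Prime := fun p hp => Nat.prime_of_mem_primeFactors hp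
  set r : ℕ := ∏ p ∈ u.primeFactors, p with hr
  have hrsq : Squarefree r := squarefree_prod_primes hprimes
  have hrd : r ∣ u := Nat.prod_primeFactors_dvd u
  have hrpf : r.primeFactors = u.primeFactors := Nat.primeFactors_prod hprimes
  -- rewrite RHS with g
  have step1 : ∑ d ∈ u.divisors,
      (moebius d : ℝ) * (s.choose i : ℝ)^(d.primeFactors.card) / alpha s i d
      = ∑ d ∈ u.divisors, (moebius d : ℝ) * g s i d := by
    refine Finset.sum_congr rfl fun d hd => ?_
    have hd0 : d ≠ 0 := (Nat.pos_of_mem_divisors hd).ne'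
    rw [g_apply s i hd0, mul_div_assoc]
  -- restrict to divisors of the radical
  have step2 : ∑ d ∈ u.divisors, (moebius d : ℝ) * g s i d
      = ∑ d ∈ r.divisors, (moebius d : ℝ) * g s i d := by
    refine (Finset.sum_subset (Nat.divisors_subset_of_dvd hu.ne' hrd) fun d hd hdr => ?_).symm
    have hd0 : d ≠ 0 := Nat.pos_of_mem_divisors hd |>.ne'
    have hdsq : ¬ Squarefree d := by
      intro hsq
      apply hdr
      rw [Nat.mem_divisors]
      refine ⟨?_, hrsq.ne_zero⟩
      have h1 : d.primeFactors ⊆ u.primeFactors :=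
        Nat.primeFactors_mono (Nat.mem_divisors.mp hd).1 hu.ne'
      calc d = ∏ p ∈ d.primeFactors, p := (Nat.prod_primeFactors_of_squarefree hsq).symm
        _ ∣ ∏ p ∈ u.primeFactors, p := Finset.prod_dvd_prod_of_subset _ _ _ h1
    rw [moebius_eq_zero_of_not_squarefree hdsq]
    simp
  rw [step1, step2, ← (g_mult s i).prodPrimeFactors_one_sub_of_squarefree (g s i) hrsq, hrpf]
  -- now both sides are products over u.primeFactors
  rw [f, f, ← Finset.prod_div_distrib]
  refine Finset.prod_congr rfl fun p hp => ?_
  have hpp : p.Prime := hprimes p hp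
  rw [g_apply s i hpp.ne_zero, hpp.primeFactors, Finset.card_singleton, pow_one]
  exact prime_term s k i p hk hi1 hik hpp
end

section
/- The infinite product A_{s,k} = ∏_p (1-1/p)^{s-k+1} ∑_{m=0}^{k-1} C(s,m)(1-1/p)^{k-1-m} p^{-m} over all primes p converges to a positive real number whenever s ≥ k ≥ 2. -/
open Finset in
lemma euler_key_id (x : ℝ) (s k : ℕ) (hk : 2 ≤ k) (hks : k ≤ s) :
    (1-x)^(s-k+1) * ∑ m ∈ Finset.range k, (s.choose m : ℝ) * (1-x)^(k-1-m) * x^m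
      = 1 - ∑ m ∈ Finset.Ico k (s+1), (s.choose m : ℝ) * (1-x)^(s-m) * x^m := by
  have h1 : (1-x)^(s-k+1) * ∑ m ∈ Finset.range k, (s.choose m : ℝ) * (1-x)^(k-1-m) * x^m
      = ∑ m ∈ Finset.range k, (s.choose m : ℝ) * (1-x)^(s-m) * x^m := by
    rw [Finset.mul_sum]
    refine Finset.sum_congr rfl fun m hm => ?_
    rw [Finset.mem_range] at hm
    have hsm : s - m = (s-k+1) + (k-1-m) := by omega
    rw [hsm, pow_add]; ring
  have h3 : ∑ m ∈ Finset.range (s+1), (s.choose m : ℝ) * (1-x)^(s-m) * x^m = 1 := by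
    have h := add_pow x (1-x) s
    have hx1 : x + (1-x) = 1 := by ring
    rw [hx1, one_pow] at h
    calc ∑ m ∈ Finset.range (s+1), (s.choose m : ℝ) * (1-x)^(s-m) * x^m
        = ∑ m ∈ Finset.range (s+1), x^m * (1-x)^(s-m) * (s.choose m : ℝ) :=
          Finset.sum_congr rfl fun m _ => by ring
      _ = 1 := h.symm
  have h2 : (∑ m ∈ Finset.range k, (s.choose m : ℝ) * (1-x)^(s-m) * x^m)
      + ∑ m ∈ Finset.Ico k (s+1), (s.choose m : ℝ) * (1-x)^(s-m) * x^m
      = ∑ m ∈ Finset.range (s+1), (s.choose m : ℝ) * (1-x)^(s-m) * x^m := by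
    rw [Finset.range_eq_Ico, Finset.range_eq_Ico]
    exact Finset.sum_Ico_consecutive (fun m => (s.choose m : ℝ) * (1-x)^(s-m) * x^m) (Nat.zero_le k) (by omega : k ≤ s + 1)
  rw [h1, eq_sub_iff_add_eq, h2, h3]

theorem euler_product_converges_pos (s k : ℕ) (hk : 2 ≤ k) (hks : k ≤ s) :
    Multipliable (fun p : Nat.Primes =>
      (1 - 1/((p:ℕ):ℝ))^(s-k+1) *
        ∑ m ∈ Finset.range k, (s.choose m : ℝ) * (1 - 1/((p:ℕ):ℝ))^(k-1-m) * (1/((p:ℕ):ℝ))^m) ∧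
    0 < ∏' p : Nat.Primes,
      (1 - 1/((p:ℕ):ℝ))^(s-k+1) *
        ∑ m ∈ Finset.range k, (s.choose m : ℝ) * (1 - 1/((p:ℕ):ℝ))^(k-1-m) * (1/((p:ℕ):ℝ))^m := by
  set F : Nat.Primes → ℝ := fun p =>
      (1 - 1/((p:ℕ):ℝ))^(s-k+1) *
        ∑ m ∈ Finset.range k, (s.choose m : ℝ) * (1 - 1/((p:ℕ):ℝ))^(k-1-m) * (1/((p:ℕ):ℝ))^m
    with hF
  -- basic facts about x = 1/p
  have hxfacts : ∀ p : Nat.Primes, 0 < 1/((p:ℕ):ℝ) ∧ 1/((p:ℕ):ℝ) ≤ 1/2 := by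
    intro p
    have h2 : (2:ℝ) ≤ ((p:ℕ):ℝ) := by exact_mod_cast p.2.two_le
    have h0 : (0:ℝ) < ((p:ℕ):ℝ) := by linarith
    exact ⟨by positivity, one_div_le_one_div_of_le (by norm_num) h2⟩
  -- lower bound : (1/2)^s ≤ F p, in particular 0 < F p
  have hFlow : ∀ p : Nat.Primes, ((1:ℝ)/2)^s ≤ F p := by
    intro p
    obtain ⟨hx0, hx2⟩ := hxfacts p
    set x := 1/((p:ℕ):ℝ) with hxdef
    have h1x : (1:ℝ)/2 ≤ 1 - x := by linarith
    have h1x0 : (0:ℝ) ≤ 1 - x := by linarith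
    have hsum : (1-x)^(k-1) ≤ ∑ m ∈ Finset.range k, (s.choose m : ℝ) * (1-x)^(k-1-m) * x^m := by
      have h0mem : 0 ∈ Finset.range k := Finset.mem_range.mpr (by omega)
      have := Finset.single_le_sum (f := fun m => (s.choose m : ℝ) * (1-x)^(k-1-m) * x^m)
        (fun m _ => by positivity) h0mem
      simpa using this
    have hpow : ((1:ℝ)/2)^(s-k+1) ≤ (1-x)^(s-k+1) := pow_le_pow_left₀ (by norm_num) h1x _
    calc ((1:ℝ)/2)^s = ((1:ℝ)/2)^(s-k+1) * ((1:ℝ)/2)^(k-1) := by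
            rw [← pow_add]; congr 1; omega
      _ ≤ (1-x)^(s-k+1) * (1-x)^(k-1) := by
            apply mul_le_mul hpow (le_trans (pow_le_pow_left₀ (by norm_num) h1x _) le_rfl)
              (by positivity) (by positivity)
      _ ≤ (1-x)^(s-k+1) * ∑ m ∈ Finset.range k, (s.choose m : ℝ) * (1-x)^(k-1-m) * x^m :=
            mul_le_mul_of_nonneg_left hsum (by positivity)
  have hFpos : ∀ p : Nat.Primes, 0 < F p := fun p =>
    lt_of_lt_of_le (by positivity) (hFlow p)
  -- upper bound : F p ≤ 1 and 1 - F p ≤ 2^s * (1/p)^2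
  have hFsub : ∀ p : Nat.Primes, 0 ≤ 1 - F p ∧ 1 - F p ≤ 2^s * (1/((p:ℕ):ℝ))^2 := by
    intro p
    obtain ⟨hx0, hx2⟩ := hxfacts p
    set x := 1/((p:ℕ):ℝ) with hxdef
    have h1x0 : (0:ℝ) ≤ 1 - x := by linarith
    have hid := euler_key_id x s k hk hks
    have hFeq : 1 - F p = ∑ m ∈ Finset.Ico k (s+1), (s.choose m : ℝ) * (1-x)^(s-m) * x^m := by
      rw [hF]; simp only [← hxdef]; rw [hid]; ring
    constructor
    · rw [hFeq]
      exact Finset.sum_nonneg fun m _ => by positivity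
    · rw [hFeq]
      have hx1 : x ≤ 1 := by linarith
      have hbound : ∀ m ∈ Finset.Ico k (s+1),
          (s.choose m : ℝ) * (1-x)^(s-m) * x^m ≤ (s.choose m : ℝ) * x^2 := by
        intro m hm
        rw [Finset.mem_Ico] at hm
        have h1 : (1-x)^(s-m) ≤ 1 := pow_le_one₀ h1x0 (by linarith)
        have h2 : x^m ≤ x^2 := pow_le_pow_of_le_one hx0.le hx1 (by omega)
        calc (s.choose m : ℝ) * (1-x)^(s-m) * x^m ≤ (s.choose m : ℝ) * 1 * x^m := by
              apply mul_le_mul_of_nonneg_right _ (by positivity)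
              exact mul_le_mul_of_nonneg_left h1 (by positivity)
          _ = (s.choose m : ℝ) * x^m := by ring
          _ ≤ (s.choose m : ℝ) * x^2 := mul_le_mul_of_nonneg_left h2 (by positivity)
      calc ∑ m ∈ Finset.Ico k (s+1), (s.choose m : ℝ) * (1-x)^(s-m) * x^m
          ≤ ∑ m ∈ Finset.Ico k (s+1), (s.choose m : ℝ) * x^2 := Finset.sum_le_sum hbound
        _ ≤ ∑ m ∈ Finset.range (s+1), (s.choose m : ℝ) * x^2 := by
            apply Finset.sum_le_sum_of_subset_of_nonneg
            · rw [Finset.range_eq_Ico]; exact Finset.Ico_subset_Ico (Nat.zero_le _) le_rfl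
            · intro m _ _; positivity
        _ = 2^s * x^2 := by
            rw [← Finset.sum_mul, ← Nat.cast_sum, Nat.sum_range_choose]
            norm_num
  -- summability of the logs
  have hlogsum : Summable fun p : Nat.Primes => Real.log (F p) := by
    have hbase : Summable fun p : Nat.Primes => (4:ℝ)^s * (1/((p:ℕ):ℝ)^2) := by
      have h1 : Summable fun n : ℕ => 1/(n:ℝ)^2 :=
        Real.summable_one_div_nat_pow.mpr one_lt_two
      exact (h1.comp_injective (Subtype.coe_injective : Function.Injective
        (fun p : Nat.Primes => (p:ℕ)))).mul_left _
    have hneg : Summable fun p : Nat.Primes => -Real.log (F p) := by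
      apply Summable.of_nonneg_of_le (fun p => ?_) (fun p => ?_) hbase
      · rw [neg_nonneg]
        exact Real.log_nonpos (hFpos p).le (by linarith [(hFsub p).1])
      · have h1 : -Real.log (F p) = Real.log (F p)⁻¹ := (Real.log_inv _).symm
        rw [h1]
        have h2 := Real.log_le_sub_one_of_pos (inv_pos.mpr (hFpos p))
        have hlow := hFlow p
        have hFp := hFpos p
        have hinv : (F p)⁻¹ ≤ 2^s := by
          rw [inv_le_comm₀ hFp (by positivity)]
          calc ((2:ℝ)^s)⁻¹ = (1/2)^s := by rw [one_div, inv_pow]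
            _ ≤ F p := hlow
        obtain ⟨hs0, hs1⟩ := hFsub p
        have : (F p)⁻¹ - 1 = (F p)⁻¹ * (1 - F p) := by
          field_simp
        calc Real.log (F p)⁻¹ ≤ (F p)⁻¹ - 1 := h2
          _ = (F p)⁻¹ * (1 - F p) := this
          _ ≤ 2^s * (2^s * (1/((p:ℕ):ℝ))^2) := by
              apply mul_le_mul hinv hs1 hs0 (by positivity)
          _ = (4:ℝ)^s * (1/((p:ℕ):ℝ)^2) := by
              rw [div_pow]
              ring_nf
              rw [show (4:ℝ) = 2*2 by norm_num, mul_pow]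
              ring
    have := hneg.neg
    simpa using this
  -- conclude
  have hmult : Multipliable F :=
    Real.multipliable_of_summable_log hFpos hlogsum
  refine ⟨hmult, ?_⟩
  have heq := Real.rexp_tsum_eq_tprod hFpos hlogsum
  rw [show (∏' p : Nat.Primes, F p) = Real.exp (∑' p : Nat.Primes, Real.log (F p)) from heq.symm]
  exact Real.exp_pos _
end
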